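/- (Truncated t-SVDM dominates truncated HOSVD.) In the setting of the previous statement (A an m×p×n real tensor, orthogonal Q, W, Z, truncation indices k₁ ≤ m, k₂ ≤ p, k₃ ≤ n, M := Zᵀ, and A_𝐤 := A ×₁ (Q₁ * Q₁ᵀ) ×₂ (W₁ * W₁ᵀ) ×₃ (Z₁ * Z₁ᵀ)), let κ := min(k₁, k₂). Then: (1) there exist an m×κ×n real tensor X and a κ×p×n real tensor Y with A_𝐤 = X ⋆_M Y; (2) if moreover A = U ⋆_M S ⋆_M Vᵀ is a t-SVDM of A under ⋆_M and A_κ is its t-rank-κ truncation, then ‖A − A_κ‖_F ≤ ‖A − A_𝐤‖_F. -/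

import Mathlib

open scoped BigOperators ComplexConjugate Matrix

noncomputable section

variable {R : Type*}

/-- Mode-3 product of a third-order tensor (encoded by its frontal slices)
with a transform matrix: `(A ×₃ M) i = ∑ j, (M i j) • (A j)`. -/
def mode3 [RCLike R] {ι α β : Type*} [Fintype ι]
    (A : ι → Matrix α β R) (M : Matrix ι ι R) : ι → Matrix α β R :=
  fun i => ∑ j, M i j • A j

/-- Frobenius (entrywise ℓ²) norm of a matrix. -/
def fnorm [RCLike R] {α β : Type*} [Fintype α] [Fintype β] (A : Matrix α β R) : ℝ :=
  Real.sqrt (∑ a, ∑ b, ‖A a b‖ ^ 2)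

/-- Frobenius norm of a tensor: `‖A‖² = ∑ i, ‖A i‖²`. -/
def tnorm [RCLike R] {ι α β : Type*} [Fintype ι] [Fintype α] [Fintype β]
    (A : ι → Matrix α β R) : ℝ :=
  Real.sqrt (∑ i, fnorm (A i) ^ 2)

/-- The ⋆_M product: facewise product in the transform domain, then inverse transform. -/
def tprodM [RCLike R] {ι m p q : Type*} [Fintype ι] [DecidableEq ι] [Fintype p]
    (M : Matrix ι ι R) (A : ι → Matrix m p R) (B : ι → Matrix p q R) :
    ι → Matrix m q R :=
  mode3 (fun i => mode3 A M i * mode3 B M i) M⁻¹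

/-- Conjugate transpose of a tensor under ⋆_M. -/
def tconj [RCLike R] {ι m p : Type*} [Fintype ι] [DecidableEq ι]
    (M : Matrix ι ι R) (A : ι → Matrix m p R) : ι → Matrix p m R :=
  mode3 (fun i => (mode3 A M i)ᴴ) M⁻¹

/-- The identity tensor under ⋆_M. -/
def tId [RCLike R] (m : Type*) [DecidableEq m] {ι : Type*} [Fintype ι] [DecidableEq ι]
    (M : Matrix ι ι R) : ι → Matrix m m R :=
  mode3 (fun _ => (1 : Matrix m m R)) M⁻¹

/-- A square tensor `Q` is ⋆_M-unitary if `Qᴴ ⋆_M Q = Q ⋆_M Qᴴ = I`. -/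
def tUnitary [RCLike R] {ι m : Type*} [Fintype ι] [DecidableEq ι] [Fintype m] [DecidableEq m]
    (M : Matrix ι ι R) (Q : ι → Matrix m m R) : Prop :=
  tprodM M (tconj M Q) Q = tId m M ∧ tprodM M Q (tconj M Q) = tId m M

/-- A t-SVDM of `A`: a factorization `A = U ⋆_M S ⋆_M Vᴴ` with `U`, `V` ⋆_M-unitary and every
transform-domain slice `Ŝ i` diagonal with real, nonnegative, nonincreasing diagonal entries. -/
def IsTSVDM [RCLike R] {m p n : ℕ} (M : Matrix (Fin n) (Fin n) R)
    (A : Fin n → Matrix (Fin m) (Fin p) R)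
    (U : Fin n → Matrix (Fin m) (Fin m) R)
    (S : Fin n → Matrix (Fin m) (Fin p) R)
    (V : Fin n → Matrix (Fin p) (Fin p) R) : Prop :=
  A = tprodM M (tprodM M U S) (tconj M V) ∧
  tUnitary M U ∧ tUnitary M V ∧
  (∀ (i : Fin n) (a : Fin m) (b : Fin p), (a : ℕ) ≠ (b : ℕ) → mode3 S M i a b = 0) ∧
  (∀ (i : Fin n) (a : Fin m) (b : Fin p), (a : ℕ) = (b : ℕ) →
      ∃ r : ℝ, 0 ≤ r ∧ mode3 S M i a b = (r : R)) ∧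
  (∀ (i : Fin n) (a a' : Fin m) (b b' : Fin p), (a : ℕ) = (b : ℕ) → (a' : ℕ) = (b' : ℕ) →
      (a : ℕ) ≤ (a' : ℕ) →
      RCLike.re (mode3 S M i a' b') ≤ RCLike.re (mode3 S M i a b))

/-- Transform-domain slice of a truncation:
(first k columns of Û) * (leading k×k block of Ŝ) * (first k columns of V̂)ᴴ. -/
def truncSlice [RCLike R] {m p : ℕ} (k : ℕ) (Uh : Matrix (Fin m) (Fin m) R)
    (Sh : Matrix (Fin m) (Fin p) R) (Vh : Matrix (Fin p) (Fin p) R) :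
    Matrix (Fin m) (Fin p) R :=
  Matrix.of fun a b =>
    ∑ j : Fin m, ∑ l : Fin p,
      if (j : ℕ) < k ∧ (l : ℕ) < k then Uh a j * Sh j l * star (Vh b l) else 0

/-- The multi-rank-ρ truncation of a t-SVDM (use `ρ = fun _ => k` for the t-rank-k truncation). -/
def truncTensor [RCLike R] {m p n : ℕ} (M : Matrix (Fin n) (Fin n) R)
    (U : Fin n → Matrix (Fin m) (Fin m) R) (S : Fin n → Matrix (Fin m) (Fin p) R)
    (V : Fin n → Matrix (Fin p) (Fin p) R) (ρ : Fin n → ℕ) :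
    Fin n → Matrix (Fin m) (Fin p) R :=
  mode3 (fun i => truncSlice (ρ i) (mode3 U M i) (mode3 S M i) (mode3 V M i)) M⁻¹

/-- The permuted tensor `Aᴾ`: `(Aᴾ c) i j = (A i) c j`. -/
def tperm [RCLike R] {m p n : ℕ} (A : Fin n → Matrix (Fin m) (Fin p) R) :
    Fin m → Matrix (Fin n) (Fin p) R :=
  fun c => Matrix.of fun i j => A i c j


namespace Stmt13Aux
open Matrix Finset

/-! ### Generic `mode3` lemmas -/

lemma mode3_apply {ι α β : Type*} [Fintype ι] (A : ι → Matrix α β ℝ) (M : Matrix ι ι ℝ)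
    (i : ι) (a : α) (b : β) : mode3 A M i a b = ∑ j, M i j * A j a b := by
  simp [mode3, Matrix.sum_apply]

lemma mode3_mode3 {ι α β : Type*} [Fintype ι] (A : ι → Matrix α β ℝ) (M N : Matrix ι ι ℝ) :
    mode3 (mode3 A N) M = mode3 A (M * N) := by
  funext i; ext a b
  simp only [mode3_apply, Matrix.mul_apply, Finset.mul_sum, Finset.sum_mul]
  rw [Finset.sum_comm]
  exact Finset.sum_congr rfl fun k _ => Finset.sum_congr rfl fun j _ => by ring

lemma mode3_one {ι α β : Type*} [Fintype ι] [DecidableEq ι] (A : ι → Matrix α β ℝ) :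
    mode3 A (1 : Matrix ι ι ℝ) = A := by
  funext i; ext a b
  simp [mode3_apply, Matrix.one_apply, ite_mul]

lemma mode3_sub {ι α β : Type*} [Fintype ι] (A B : ι → Matrix α β ℝ) (M : Matrix ι ι ℝ) (i : ι) :
    mode3 (fun j => A j - B j) M i = mode3 A M i - mode3 B M i := by
  ext a b
  simp [mode3_apply, mul_sub, Finset.sum_sub_distrib, Matrix.sub_apply]

lemma mode3_constmul {ι : Type*} [Fintype ι] {α β γ δ : Type*} [Fintype α] [Fintype β]
    (L : Matrix γ α ℝ) (Rm : Matrix β δ ℝ) (B : ι → Matrix α β ℝ) (M : Matrix ι ι ℝ) (i : ι) :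
    mode3 (fun j => L * B j * Rm) M i = L * mode3 B M i * Rm := by
  ext a b
  simp only [mode3_apply, Matrix.mul_apply, Finset.mul_sum, Finset.sum_mul]
  rw [Finset.sum_comm]
  refine Finset.sum_congr rfl fun x _ => ?_
  rw [Finset.sum_comm]
  exact Finset.sum_congr rfl fun y _ => Finset.sum_congr rfl fun j _ => by ring

/-! ### Frobenius norm squared -/

def f2 {α β : Type*} [Fintype α] [Fintype β] (X : Matrix α β ℝ) : ℝ := ∑ a, ∑ b, X a b ^ 2

lemma f2_nonneg {α β : Type*} [Fintype α] [Fintype β] (X : Matrix α β ℝ) : 0 ≤ f2 X :=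
  Finset.sum_nonneg fun _ _ => Finset.sum_nonneg fun _ _ => sq_nonneg _

lemma f2_eq_trace {α β : Type*} [Fintype α] [Fintype β] (X : Matrix α β ℝ) :
    f2 X = Matrix.trace (Xᵀ * X) := by
  simp only [f2, Matrix.trace, Matrix.diag, Matrix.mul_apply, Matrix.transpose_apply]
  rw [Finset.sum_comm]
  exact Finset.sum_congr rfl fun a _ => Finset.sum_congr rfl fun b _ => by ring

lemma f2_transpose {α β : Type*} [Fintype α] [Fintype β] (X : Matrix α β ℝ) :
    f2 Xᵀ = f2 X := by
  simp only [f2, Matrix.transpose_apply]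
  exact Finset.sum_comm

lemma f2_mul_left {α β γ : Type*} [Fintype α] [Fintype β] [Fintype γ] [DecidableEq β]
    (U : Matrix α β ℝ) (hU : Uᵀ * U = 1) (B : Matrix β γ ℝ) : f2 (U * B) = f2 B := by
  rw [f2_eq_trace, f2_eq_trace, Matrix.transpose_mul,
    show Bᵀ * Uᵀ * (U * B) = Bᵀ * (Uᵀ * U) * B by simp only [Matrix.mul_assoc], hU,
    Matrix.mul_one]

lemma f2_mul_right {α β γ : Type*} [Fintype α] [Fintype β] [Fintype γ] [DecidableEq γ]
    (V : Matrix β γ ℝ) (hV : Vᵀ * V = 1) (B : Matrix α γ ℝ) : f2 (B * Vᵀ) = f2 B := by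
  rw [f2_eq_trace, f2_eq_trace, Matrix.transpose_mul, Matrix.transpose_transpose,
    show V * Bᵀ * (B * Vᵀ) = V * ((Bᵀ * B) * Vᵀ) by simp only [Matrix.mul_assoc],
    Matrix.trace_mul_comm V ((Bᵀ * B) * Vᵀ),
    show Bᵀ * B * Vᵀ * V = Bᵀ * B * (Vᵀ * V) by simp only [Matrix.mul_assoc], hV,
    Matrix.mul_one]

lemma f2_sub_proj {α β : Type*} [Fintype α] [Fintype β]
    (X : Matrix α β ℝ) (P : Matrix α α ℝ) (Rm : Matrix β β ℝ)
    (hP : Pᵀ = P) (hP2 : P * P = P) (hR : Rmᵀ = Rm) (hR2 : Rm * Rm = Rm) :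
    f2 (X - P * X * Rm) = f2 X - f2 (P * X * Rm) := by
  have key : Matrix.trace (Xᵀ * (P * X * Rm)) = f2 (P * X * Rm) := by
    rw [f2_eq_trace]
    have h1 : (P * X * Rm)ᵀ * (P * X * Rm) = Rm * (Xᵀ * (P * (X * Rm))) := by
      simp only [Matrix.transpose_mul, hP, hR, Matrix.mul_assoc]
      rw [← Matrix.mul_assoc P P, hP2]
    rw [h1, Matrix.trace_mul_comm Rm (Xᵀ * (P * (X * Rm))),
      show Xᵀ * (P * (X * Rm)) * Rm = Xᵀ * (P * (X * (Rm * Rm))) by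
        simp only [Matrix.mul_assoc], hR2]
    simp only [Matrix.mul_assoc]
  have htr : Matrix.trace ((P * X * Rm)ᵀ * X) = Matrix.trace (Xᵀ * (P * X * Rm)) := by
    rw [← Matrix.trace_transpose ((P * X * Rm)ᵀ * X), Matrix.transpose_mul,
      Matrix.transpose_transpose]
  have expand : f2 (X - P * X * Rm) =
      f2 X - 2 * Matrix.trace (Xᵀ * (P * X * Rm)) + f2 (P * X * Rm) := by
    rw [f2_eq_trace, f2_eq_trace, f2_eq_trace]
    simp only [Matrix.transpose_sub, Matrix.sub_mul, Matrix.mul_sub, Matrix.trace_sub]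
    rw [htr]; ring
  rw [expand, key]; ring

/-! ### orthogonal-transform invariance -/

lemma ite_sum_zero {γ : Type*} [Fintype γ] (c : Prop) [Decidable c] (f : γ → ℝ) :
    (if c then ∑ x, f x else 0) = ∑ x, if c then f x else 0 := by
  by_cases h : c <;> simp [h]

lemma l2_pres {n : ℕ} (M : Matrix (Fin n) (Fin n) ℝ) (hM : Mᵀ * M = 1) (x : Fin n → ℝ) :
    ∑ i, (∑ j, M i j * x j) ^ 2 = ∑ j, x j ^ 2 := by
  have h1 : ∀ i, (∑ j, M i j * x j) ^ 2 = ∑ j, ∑ l, (M i j * M i l) * (x j * x l) := by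
    intro i; rw [sq, Finset.sum_mul_sum]
    exact Finset.sum_congr rfl fun j _ => Finset.sum_congr rfl fun l _ => by ring
  simp only [h1]
  rw [Finset.sum_comm]
  have h2 : ∀ j, (∑ i, ∑ l, (M i j * M i l) * (x j * x l))
      = ∑ l, (∑ i, M i j * M i l) * (x j * x l) := by
    intro j; rw [Finset.sum_comm]
    exact Finset.sum_congr rfl fun l _ => (Finset.sum_mul _ _ _).symm
  simp only [h2]
  have hMe : ∀ j l, (∑ i, M i j * M i l) = if j = l then (1:ℝ) else 0 := by
    intro j l
    have := congrFun (congrFun hM j) l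
    simpa [Matrix.mul_apply, Matrix.transpose_apply, Matrix.one_apply] using this
  simp only [hMe, ite_mul, one_mul, zero_mul]
  refine Finset.sum_congr rfl fun j _ => ?_
  rw [Finset.sum_ite_eq]
  simp [sq]

lemma sumf2_pres {n : ℕ} {α β : Type*} [Fintype α] [Fintype β]
    (M : Matrix (Fin n) (Fin n) ℝ) (hM : Mᵀ * M = 1) (C : Fin n → Matrix α β ℝ) :
    ∑ i, f2 (mode3 C M i) = ∑ i, f2 (C i) := by
  simp only [f2, mode3_apply]
  rw [Finset.sum_comm]
  conv_rhs => rw [Finset.sum_comm]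
  refine Finset.sum_congr rfl fun a _ => ?_
  rw [Finset.sum_comm]
  conv_rhs => rw [Finset.sum_comm]
  refine Finset.sum_congr rfl fun b _ => ?_
  exact l2_pres M hM fun j => C j a b

/-! ### knapsack and compression inequalities -/

lemma knapsack {p k : ℕ} (d w : Fin p → ℝ) (hd0 : ∀ l, 0 ≤ d l)
    (hmono : ∀ l l' : Fin p, (l : ℕ) ≤ (l' : ℕ) → d l' ≤ d l)
    (hw0 : ∀ l, 0 ≤ w l) (hw1 : ∀ l, w l ≤ 1) (hsum : ∑ l, w l ≤ (k : ℝ)) :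
    ∑ l : Fin p, w l * d l ≤ ∑ l : Fin p, (if (l : ℕ) < k then d l else 0) := by
  by_cases hkp : p ≤ k
  · have hall : ∀ l : Fin p, (l : ℕ) < k := fun l => lt_of_lt_of_le l.isLt hkp
    calc ∑ l : Fin p, w l * d l ≤ ∑ l : Fin p, d l :=
          Finset.sum_le_sum fun l _ => by nlinarith [hw1 l, hw0 l, hd0 l]
      _ = _ := by simp [hall]
  · push_neg at hkp
    set T := d ⟨k, hkp⟩ with hT
    have hT0 : 0 ≤ T := hd0 _
    have hbound : ∀ l : Fin p,
        w l * d l ≤ (if (l : ℕ) < k then d l else 0) + w l * T - (if (l : ℕ) < k then T else 0) := by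
      intro l
      by_cases hl : (l : ℕ) < k
      · have h1 : T ≤ d l := hmono l ⟨k, hkp⟩ (le_of_lt hl)
        simp only [hl, if_true]
        nlinarith [hw1 l, hw0 l, hd0 l]
      · have h1 : d l ≤ T := hmono ⟨k, hkp⟩ l (not_lt.mp hl)
        simp only [hl, if_false]
        nlinarith [hw0 l]
    have hcount : ∑ l : Fin p, (if (l : ℕ) < k then T else 0) = (k : ℝ) * T := by
      rw [Fin.sum_univ_eq_sum_range (fun t => if t < k then T else 0) p]
      have hfil : (Finset.range p).filter (fun i => i < k) = Finset.range k := by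
        ext t; simp only [Finset.mem_filter, Finset.mem_range]; omega
      rw [← Finset.sum_filter, hfil, Finset.sum_const, Finset.card_range, nsmul_eq_mul]
    calc ∑ l : Fin p, w l * d l
        ≤ ∑ l : Fin p, ((if (l : ℕ) < k then d l else 0) + w l * T - (if (l : ℕ) < k then T else 0)) :=
          Finset.sum_le_sum fun l _ => hbound l
      _ = (∑ l : Fin p, (if (l : ℕ) < k then d l else 0)) + (∑ l : Fin p, w l) * T - (k : ℝ) * T := by
          rw [Finset.sum_sub_distrib, Finset.sum_add_distrib, hcount, Finset.sum_mul]
      _ ≤ ∑ l : Fin p, (if (l : ℕ) < k then d l else 0) := by nlinarith [hT0, hsum]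

lemma f2_mul_left_le {k m : ℕ} {γ : Type*} [Fintype γ]
    (E : Matrix (Fin k) (Fin m) ℝ) (hE : E * Eᵀ = 1) (B : Matrix (Fin m) γ ℝ) :
    f2 (E * B) ≤ f2 B := by
  set J : Matrix (Fin m) (Fin m) ℝ := 1 - Eᵀ * E with hJ
  have hJt : Jᵀ = J := by
    simp [hJ, Matrix.transpose_sub, Matrix.transpose_mul, Matrix.transpose_one]
  have hJ2 : J * J = J := by
    simp only [hJ, Matrix.sub_mul, Matrix.mul_sub, Matrix.one_mul, Matrix.mul_one]
    rw [show Eᵀ * E * (Eᵀ * E) = Eᵀ * ((E * Eᵀ) * E) by simp only [Matrix.mul_assoc], hE,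
      Matrix.one_mul]
    abel
  have key : f2 (E * B) = f2 B - f2 (J * B) := by
    rw [f2_eq_trace, f2_eq_trace, f2_eq_trace]
    rw [show (J * B)ᵀ * (J * B) = Bᵀ * (Jᵀ * (J * B)) by simp only [Matrix.transpose_mul,
      Matrix.mul_assoc], hJt, show J * (J * B) = (J * J) * B by simp only [Matrix.mul_assoc], hJ2]
    rw [show (E * B)ᵀ * (E * B) = Bᵀ * ((Eᵀ * E) * B) by simp only [Matrix.transpose_mul,
      Matrix.mul_assoc]]
    rw [show (Eᵀ * E : Matrix (Fin m) (Fin m) ℝ) = 1 - J by simp [hJ]]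
    simp only [Matrix.sub_mul, Matrix.mul_sub, Matrix.one_mul, Matrix.trace_sub]
  rw [key]
  have := f2_nonneg (J * B)
  linarith

lemma f2_mul_Ft {m p k : ℕ} (Sh : Matrix (Fin m) (Fin p) ℝ)
    (hoff : ∀ (j : Fin m) (l : Fin p), (j : ℕ) ≠ (l : ℕ) → Sh j l = 0)
    (F : Matrix (Fin k) (Fin p) ℝ) :
    f2 (Sh * Fᵀ) = ∑ l : Fin p, (∑ b, F b l ^ 2) * (∑ j, Sh j l ^ 2) := by
  have hsq : ∀ (j : Fin m) (b : Fin k),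
      (∑ l, Sh j l * F b l) ^ 2 = ∑ l, Sh j l ^ 2 * F b l ^ 2 := by
    intro j b
    rw [sq, Finset.sum_mul_sum]
    refine Finset.sum_congr rfl fun l _ => ?_
    rw [Finset.sum_eq_single l]
    · ring
    · intro l' _ hne
      have hvne : (l' : ℕ) ≠ (l : ℕ) := fun h => hne (Fin.ext h)
      rcases eq_or_ne (j : ℕ) (l : ℕ) with h | h
      · rw [hoff j l' (by omega)]; ring
      · rw [hoff j l h]; ring
    · intro h; exact absurd (Finset.mem_univ l) h
  simp only [f2, Matrix.mul_apply, Matrix.transpose_apply, hsq]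
  rw [Finset.sum_comm]
  rw [show (∑ y : Fin k, ∑ x : Fin m, ∑ l : Fin p, Sh x l ^ 2 * F y l ^ 2)
      = ∑ y : Fin k, ∑ l : Fin p, ∑ x : Fin m, Sh x l ^ 2 * F y l ^ 2 from
    Finset.sum_congr rfl fun y _ => Finset.sum_comm]
  rw [Finset.sum_comm]
  refine Finset.sum_congr rfl fun l _ => ?_
  rw [Finset.sum_mul_sum]
  exact Finset.sum_congr rfl fun b _ => Finset.sum_congr rfl fun j _ => by ring

lemma fproj_le_one {k p : ℕ} (F : Matrix (Fin k) (Fin p) ℝ) (hF : F * Fᵀ = 1) (l : Fin p) :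
    ∑ b, F b l ^ 2 ≤ 1 := by
  have hproj : (Fᵀ * F) * (Fᵀ * F) = Fᵀ * F := by
    rw [show (Fᵀ * F) * (Fᵀ * F) = Fᵀ * ((F * Fᵀ) * F) by simp only [Matrix.mul_assoc], hF,
      Matrix.one_mul]
  have hsym : ∀ t, (Fᵀ * F) t l = (Fᵀ * F) l t := by
    intro t
    simp only [Matrix.mul_apply, Matrix.transpose_apply]
    exact Finset.sum_congr rfl fun b _ => by ring
  have h1 : (Fᵀ * F) l l = ∑ t, ((Fᵀ * F) l t) ^ 2 := by
    conv_lhs => rw [← hproj]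
    rw [Matrix.mul_apply]
    exact Finset.sum_congr rfl fun t _ => by rw [hsym t]; ring
  have h2 : (Fᵀ * F) l l = ∑ b, F b l ^ 2 := by
    simp only [Matrix.mul_apply, Matrix.transpose_apply]
    exact Finset.sum_congr rfl fun b _ => (sq _).symm
  have h3 : 0 ≤ ∑ b, F b l ^ 2 := Finset.sum_nonneg fun _ _ => sq_nonneg _
  have h4 : ((Fᵀ * F) l l) ^ 2 ≤ ∑ t, ((Fᵀ * F) l t) ^ 2 :=
    Finset.single_le_sum (f := fun t => ((Fᵀ * F) l t) ^ 2) (fun t _ => sq_nonneg _)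
      (Finset.mem_univ l)
  nlinarith [h1, h2, h3, h4]

lemma fproj_sum {k p : ℕ} (F : Matrix (Fin k) (Fin p) ℝ) (hF : F * Fᵀ = 1) :
    ∑ l : Fin p, ∑ b, F b l ^ 2 = (k : ℝ) := by
  calc ∑ l : Fin p, ∑ b, F b l ^ 2 = Matrix.trace (Fᵀ * F) := by
        simp only [Matrix.trace, Matrix.diag, Matrix.mul_apply, Matrix.transpose_apply]
        exact Finset.sum_congr rfl fun l _ => Finset.sum_congr rfl fun b _ => sq _
    _ = Matrix.trace (F * Fᵀ) := Matrix.trace_mul_comm _ _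
    _ = (k : ℝ) := by rw [hF, Matrix.trace_one]; simp

lemma compress {k1 k2 m p : ℕ} (E : Matrix (Fin k1) (Fin m) ℝ) (F : Matrix (Fin k2) (Fin p) ℝ)
    (hE : E * Eᵀ = 1) (hF : F * Fᵀ = 1) (Sh : Matrix (Fin m) (Fin p) ℝ)
    (hoff : ∀ (j : Fin m) (l : Fin p), (j : ℕ) ≠ (l : ℕ) → Sh j l = 0)
    (hmono : ∀ l l' : Fin p, (l : ℕ) ≤ (l' : ℕ) → (∑ j, Sh j l' ^ 2) ≤ ∑ j, Sh j l ^ 2) :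
    f2 (E * Sh * Fᵀ) ≤ ∑ l : Fin p, (if (l : ℕ) < k2 then ∑ j, Sh j l ^ 2 else 0) := by
  have h1 : f2 (E * Sh * Fᵀ) ≤ f2 (Sh * Fᵀ) := by
    rw [Matrix.mul_assoc]; exact f2_mul_left_le E hE _
  rw [f2_mul_Ft Sh hoff F] at h1
  exact le_trans h1 (knapsack (fun l => ∑ j, Sh j l ^ 2) (fun l => ∑ b, F b l ^ 2)
    (fun l => Finset.sum_nonneg fun _ _ => sq_nonneg _) hmono
    (fun l => Finset.sum_nonneg fun _ _ => sq_nonneg _) (fun l => fproj_le_one F hF l)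
    (le_of_eq (fproj_sum F hF)))

/-! ### diagonal structure -/

lemma dcol_eq {m p : ℕ} (Sh : Matrix (Fin m) (Fin p) ℝ)
    (hoff : ∀ (j : Fin m) (l : Fin p), (j : ℕ) ≠ (l : ℕ) → Sh j l = 0) (l : Fin p) :
    (∑ j, Sh j l ^ 2) = if h : (l : ℕ) < m then Sh ⟨l, h⟩ l ^ 2 else 0 := by
  by_cases h : (l : ℕ) < m
  · rw [dif_pos h]
    refine Finset.sum_eq_single (⟨(l : ℕ), h⟩ : Fin m) (fun j _ hne => ?_)
      (fun h' => absurd (Finset.mem_univ _) h')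
    rw [hoff j l (fun hv => hne (Fin.ext hv))]
    simp
  · rw [dif_neg h]
    refine Finset.sum_eq_zero fun j _ => ?_
    rw [hoff j l (by have := j.isLt; omega)]
    simp

lemma dcol_mono {m p : ℕ} (Sh : Matrix (Fin m) (Fin p) ℝ)
    (hoff : ∀ (j : Fin m) (l : Fin p), (j : ℕ) ≠ (l : ℕ) → Sh j l = 0)
    (hpos : ∀ (j : Fin m) (l : Fin p), (j : ℕ) = (l : ℕ) → 0 ≤ Sh j l)
    (hmon : ∀ (j j' : Fin m) (l l' : Fin p), (j : ℕ) = (l : ℕ) → (j' : ℕ) = (l' : ℕ) →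
      (j : ℕ) ≤ (j' : ℕ) → Sh j' l' ≤ Sh j l) :
    ∀ l l' : Fin p, (l : ℕ) ≤ (l' : ℕ) → (∑ j, Sh j l' ^ 2) ≤ ∑ j, Sh j l ^ 2 := by
  intro l l' hle
  rw [dcol_eq Sh hoff l, dcol_eq Sh hoff l']
  by_cases h2 : (l' : ℕ) < m
  · have h1 : (l : ℕ) < m := lt_of_le_of_lt hle h2
    rw [dif_pos h1, dif_pos h2]
    have e1 : 0 ≤ Sh ⟨l', h2⟩ l' := hpos _ _ rfl
    have e2 : Sh ⟨l', h2⟩ l' ≤ Sh ⟨l, h1⟩ l := hmon _ _ _ _ rfl rfl hle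
    exact pow_le_pow_left₀ e1 e2 2
  · rw [dif_neg h2]
    split_ifs with h1 <;> positivity

lemma indswap {m p : ℕ} (Sh : Matrix (Fin m) (Fin p) ℝ)
    (hoff : ∀ (j : Fin m) (l : Fin p), (j : ℕ) ≠ (l : ℕ) → Sh j l = 0) (k : ℕ) :
    (∑ j : Fin m, if (j : ℕ) < k then ∑ l, Sh j l ^ 2 else 0)
      = ∑ l : Fin p, if (l : ℕ) < k then ∑ j, Sh j l ^ 2 else 0 := by
  simp only [ite_sum_zero]
  rw [Finset.sum_comm]
  refine Finset.sum_congr rfl fun l _ => Finset.sum_congr rfl fun j _ => ?_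
  rcases eq_or_ne (j : ℕ) (l : ℕ) with h | h
  · rw [h]
  · rw [hoff j l h]; simp

lemma f2_S_sub_D {m p : ℕ} (Sh : Matrix (Fin m) (Fin p) ℝ)
    (hoff : ∀ (j : Fin m) (l : Fin p), (j : ℕ) ≠ (l : ℕ) → Sh j l = 0) (κ : ℕ) :
    f2 (Sh - Matrix.of fun (j : Fin m) (l : Fin p) =>
        if (j : ℕ) < κ ∧ (l : ℕ) < κ then Sh j l else 0)
      = ∑ l : Fin p, (if (l : ℕ) < κ then 0 else ∑ j, Sh j l ^ 2) := by
  simp only [f2, Matrix.sub_apply, Matrix.of_apply]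
  rw [Finset.sum_comm]
  refine Finset.sum_congr rfl fun l _ => ?_
  by_cases hl : (l : ℕ) < κ
  · rw [if_pos hl]
    refine Finset.sum_eq_zero fun j _ => ?_
    by_cases hj : (j : ℕ) = (l : ℕ)
    · rw [if_pos ⟨by omega, hl⟩]; simp
    · rw [hoff j l hj]; split_ifs <;> simp
  · rw [if_neg hl]
    refine Finset.sum_congr rfl fun j _ => ?_
    rw [if_neg (fun hc : (j : ℕ) < κ ∧ (l : ℕ) < κ => hl hc.2)]
    ring

end Stmt13Aux

namespace Stmt13Aux
open Matrix Finset

lemma conjT_real {α β : Type*} (X : Matrix α β ℝ) : Xᴴ = Xᵀ := by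
  ext i j; simp [Matrix.conjTranspose_apply]

lemma ortho_pair {m : ℕ} (Q : Matrix (Fin m) (Fin m) ℝ)
    (hQ : Q ∈ Matrix.orthogonalGroup (Fin m) ℝ) : Q * Qᵀ = 1 ∧ Qᵀ * Q = 1 := by
  have h1 := (Matrix.mem_orthogonalGroup_iff _ _).mp hQ
  have h2 := (Matrix.mem_orthogonalGroup_iff' _ _).mp hQ
  have hst : star Q = Qᵀ := by ext i j; simp [Matrix.star_apply]
  exact ⟨h1, h2⟩

lemma sub_ortho {m k : ℕ} (Q : Matrix (Fin m) (Fin m) ℝ) (hQ : Qᵀ * Q = 1) (h : k ≤ m) :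
    (Q.submatrix id (Fin.castLE h))ᵀ * Q.submatrix id (Fin.castLE h) = 1 := by
  ext s t
  have hq := congrFun (congrFun hQ (Fin.castLE h s)) (Fin.castLE h t)
  simp only [Matrix.mul_apply, Matrix.transpose_apply, Matrix.submatrix_apply, id_eq] at hq ⊢
  rw [hq, Matrix.one_apply, Matrix.one_apply]
  simp [Fin.castLE_inj]

section ZL

variable {n : ℕ} (Z : Matrix (Fin n) (Fin n) ℝ)

lemma inv_Zt (hZtZ : Zᵀ * Z = 1) : (Zᵀ)⁻¹ = Z := Matrix.inv_eq_right_inv hZtZ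

lemma canc_inv_hat (hZtZ : Zᵀ * Z = 1) {α β : Type*} [Fintype α] [Fintype β]
    (C : Fin n → Matrix α β ℝ) : mode3 (mode3 C ((Zᵀ)⁻¹)) Zᵀ = C := by
  rw [inv_Zt Z hZtZ, mode3_mode3, hZtZ, mode3_one]

lemma canc_hat_inv (hZZt : Z * Zᵀ = 1) (hZtZ : Zᵀ * Z = 1) {α β : Type*} [Fintype α] [Fintype β]
    (C : Fin n → Matrix α β ℝ) : mode3 (mode3 C Zᵀ) ((Zᵀ)⁻¹) = C := by
  rw [inv_Zt Z hZtZ, mode3_mode3, hZZt, mode3_one]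

lemma hat_tprodM (hZtZ : Zᵀ * Z = 1) {α β γ : Type*} [Fintype α] [Fintype β] [Fintype γ]
    (X : Fin n → Matrix α β ℝ) (Y : Fin n → Matrix β γ ℝ) :
    mode3 (tprodM Zᵀ X Y) Zᵀ = fun i => mode3 X Zᵀ i * mode3 Y Zᵀ i :=
  canc_inv_hat Z hZtZ _

lemma hat_tconj (hZtZ : Zᵀ * Z = 1) {α β : Type*} [Fintype α] [Fintype β]
    (V : Fin n → Matrix α β ℝ) :
    mode3 (tconj Zᵀ V) Zᵀ = fun i => (mode3 V Zᵀ i)ᵀ := by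
  have h : mode3 (tconj Zᵀ V) Zᵀ = fun i => (mode3 V Zᵀ i)ᴴ := canc_inv_hat Z hZtZ _
  rw [h]; funext i; exact conjT_real _

lemma hat_tId (hZtZ : Zᵀ * Z = 1) (α : Type*) [Fintype α] [DecidableEq α] :
    mode3 (tId α Zᵀ) Zᵀ = fun _ => (1 : Matrix α α ℝ) :=
  canc_inv_hat Z hZtZ _

lemma hat_trunc (hZtZ : Zᵀ * Z = 1) {m p : ℕ} (U : Fin n → Matrix (Fin m) (Fin m) ℝ)
    (S : Fin n → Matrix (Fin m) (Fin p) ℝ) (V : Fin n → Matrix (Fin p) (Fin p) ℝ)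
    (ρ : Fin n → ℕ) :
    mode3 (truncTensor Zᵀ U S V ρ) Zᵀ
      = fun i => truncSlice (ρ i) (mode3 U Zᵀ i) (mode3 S Zᵀ i) (mode3 V Zᵀ i) :=
  canc_inv_hat Z hZtZ _

end ZL

lemma truncSlice_eq {m p : ℕ} (κ : ℕ) (Uh : Matrix (Fin m) (Fin m) ℝ)
    (Sh : Matrix (Fin m) (Fin p) ℝ) (Vh : Matrix (Fin p) (Fin p) ℝ) :
    truncSlice κ Uh Sh Vh = Uh * (Matrix.of fun (j : Fin m) (l : Fin p) =>
      if (j : ℕ) < κ ∧ (l : ℕ) < κ then Sh j l else 0) * Vhᵀ := by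
  ext a b
  simp only [truncSlice, Matrix.mul_apply, Matrix.of_apply, Matrix.transpose_apply,
    Finset.sum_mul, star_trivial]
  rw [Finset.sum_comm]
  refine Finset.sum_congr rfl fun l _ => Finset.sum_congr rfl fun j _ => ?_
  by_cases hc : (j : ℕ) < κ ∧ (l : ℕ) < κ
  · rw [if_pos hc, if_pos hc]
  · rw [if_neg hc, if_neg hc]; ring

lemma fnorm_sq {α β : Type*} [Fintype α] [Fintype β] (X : Matrix α β ℝ) :
    fnorm X ^ 2 = f2 X := by
  rw [fnorm, Real.sq_sqrt (Finset.sum_nonneg fun _ _ => Finset.sum_nonneg fun _ _ => by positivity)]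
  exact Finset.sum_congr rfl fun a _ => Finset.sum_congr rfl fun b _ => by
    rw [Real.norm_eq_abs, sq_abs]

end Stmt13Aux

open Stmt13Aux Matrix Finset

/-- truncated t-SVDM dominates truncated HOSVD: with `M := Zᵀ` and
`κ := min k₁ k₂`, (1) the truncated HOSVD approximation `A_𝐤` factors as `X ⋆_M Y` with inner
dimension `κ`; (2) if `A = U ⋆_M S ⋆_M Vᵀ` is a t-SVDM, then the t-rank-κ truncation `A_κ`
satisfies `‖A − A_κ‖ ≤ ‖A − A_𝐤‖`. -/

theorem stmt13 {m p n : ℕ} (A : Fin n → Matrix (Fin m) (Fin p) ℝ)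
    (Q : Matrix (Fin m) (Fin m) ℝ) (hQ : Q ∈ Matrix.orthogonalGroup (Fin m) ℝ)
    (Wm : Matrix (Fin p) (Fin p) ℝ) (hWm : Wm ∈ Matrix.orthogonalGroup (Fin p) ℝ)
    (Z : Matrix (Fin n) (Fin n) ℝ) (hZ : Z ∈ Matrix.orthogonalGroup (Fin n) ℝ)
    (k₁ k₂ k₃ : ℕ) (h₁ : k₁ ≤ m) (h₂ : k₂ ≤ p) (h₃ : k₃ ≤ n) :
    let Q₁ := Q.submatrix id (Fin.castLE h₁)
    let W₁ := Wm.submatrix id (Fin.castLE h₂)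
    let Z₁ := Z.submatrix id (Fin.castLE h₃)
    let Ak : Fin n → Matrix (Fin m) (Fin p) ℝ :=
      fun i => Q₁ * Q₁ᵀ * mode3 A (Z₁ * Z₁ᵀ) i * (W₁ * W₁ᵀ)ᵀ
    (∃ (X : Fin n → Matrix (Fin m) (Fin (min k₁ k₂)) ℝ)
       (Y : Fin n → Matrix (Fin (min k₁ k₂)) (Fin p) ℝ),
        Ak = tprodM Zᵀ X Y) ∧
    (∀ (U : Fin n → Matrix (Fin m) (Fin m) ℝ)
       (S : Fin n → Matrix (Fin m) (Fin p) ℝ)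
       (V : Fin n → Matrix (Fin p) (Fin p) ℝ),
        IsTSVDM Zᵀ A U S V →
        tnorm (fun i => A i - truncTensor Zᵀ U S V (fun _ => min k₁ k₂) i) ≤
          tnorm (fun i => A i - Ak i)) := by
  obtain ⟨hQQt, hQtQ⟩ := ortho_pair Q hQ
  obtain ⟨hWWt, hWtW⟩ := ortho_pair Wm hWm
  obtain ⟨hZZt, hZtZ⟩ := ortho_pair Z hZ
  intro Q₁ W₁ Z₁ Ak
  have hQ₁ : Q₁ᵀ * Q₁ = 1 := sub_ortho Q hQtQ h₁
  have hW₁ : W₁ᵀ * W₁ = 1 := sub_ortho Wm hWtW h₂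
  have hP2 : (Q₁ * Q₁ᵀ) * (Q₁ * Q₁ᵀ) = Q₁ * Q₁ᵀ := by
    rw [show Q₁ * Q₁ᵀ * (Q₁ * Q₁ᵀ) = Q₁ * ((Q₁ᵀ * Q₁) * Q₁ᵀ) by simp only [Matrix.mul_assoc],
      hQ₁, Matrix.one_mul]
  have hR2 : (W₁ * W₁ᵀ) * (W₁ * W₁ᵀ) = W₁ * W₁ᵀ := by
    rw [show W₁ * W₁ᵀ * (W₁ * W₁ᵀ) = W₁ * ((W₁ᵀ * W₁) * W₁ᵀ) by simp only [Matrix.mul_assoc],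
      hW₁, Matrix.one_mul]
  have hPt : (Q₁ * Q₁ᵀ)ᵀ = Q₁ * Q₁ᵀ := by
    rw [Matrix.transpose_mul, Matrix.transpose_transpose]
  have hRt : (W₁ * W₁ᵀ)ᵀ = W₁ * W₁ᵀ := by
    rw [Matrix.transpose_mul, Matrix.transpose_transpose]
  have hAk' : Ak = fun i => (Q₁ * Q₁ᵀ) * mode3 A (Z₁ * Z₁ᵀ) i * (W₁ * W₁ᵀ) := by
    funext i
    rw [show Ak i = Q₁ * Q₁ᵀ * mode3 A (Z₁ * Z₁ᵀ) i * (W₁ * W₁ᵀ)ᵀ from rfl, hRt]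
  -- entries of Zᵀ * (Z₁ * Z₁ᵀ)
  have hNentry : ∀ i j : Fin n, (Zᵀ * (Z₁ * Z₁ᵀ)) i j
      = if (i : ℕ) < k₃ then Zᵀ i j else 0 := by
    intro i j
    have hstep : (Zᵀ * (Z₁ * Z₁ᵀ)) i j
        = ∑ t : Fin k₃, (if i = Fin.castLE h₃ t then (1:ℝ) else 0) * Z j (Fin.castLE h₃ t) := by
      rw [← Matrix.mul_assoc, Matrix.mul_apply]
      refine Finset.sum_congr rfl fun t _ => ?_
      have h1 : (Zᵀ * Z₁) i t = (1 : Matrix (Fin n) (Fin n) ℝ) i (Fin.castLE h₃ t) := by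
        rw [← hZtZ, Matrix.mul_apply, Matrix.mul_apply]
        exact Finset.sum_congr rfl fun a _ => rfl
      rw [h1, Matrix.one_apply]
      rfl
    by_cases hi : (i : ℕ) < k₃
    · rw [if_pos hi, hstep]
      rw [Finset.sum_eq_single (⟨(i : ℕ), hi⟩ : Fin k₃)]
      · rw [if_pos (Fin.ext rfl : i = Fin.castLE h₃ ⟨(i : ℕ), hi⟩), one_mul]
        rfl
      · intro t _ hne
        have hni : i ≠ Fin.castLE h₃ t := fun he =>
          hne (Fin.ext (by simpa using (congrArg Fin.val he).symm))
        rw [if_neg hni, zero_mul]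
      · intro h; exact absurd (Finset.mem_univ _) h
    · rw [if_neg hi, hstep]
      refine Finset.sum_eq_zero fun t _ => ?_
      have hni : i ≠ Fin.castLE h₃ t := by
        intro he
        have := congrArg Fin.val he
        simp at this
        omega
      rw [if_neg hni, zero_mul]
  have hmodeN : ∀ i, mode3 A (Zᵀ * (Z₁ * Z₁ᵀ)) i
      = if (i : ℕ) < k₃ then mode3 A Zᵀ i else 0 := by
    intro i
    by_cases hi : (i : ℕ) < k₃
    · rw [if_pos hi]
      show (∑ j, (Zᵀ * (Z₁ * Z₁ᵀ)) i j • A j) = ∑ j, Zᵀ i j • A j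
      exact Finset.sum_congr rfl fun j _ => by rw [hNentry i j, if_pos hi]
    · rw [if_neg hi]
      show (∑ j, (Zᵀ * (Z₁ * Z₁ᵀ)) i j • A j) = 0
      exact Finset.sum_eq_zero fun j _ => by rw [hNentry i j, if_neg hi, zero_smul]
  have hChat : ∀ i, mode3 Ak Zᵀ i
      = if (i : ℕ) < k₃ then (Q₁ * Q₁ᵀ) * mode3 A Zᵀ i * (W₁ * W₁ᵀ) else 0 := by
    intro i
    rw [hAk', mode3_constmul, mode3_mode3, hmodeN i]
    by_cases hi : (i : ℕ) < k₃
    · rw [if_pos hi, if_pos hi]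
    · rw [if_neg hi, if_neg hi, Matrix.mul_zero, Matrix.zero_mul]
  have hPabs : ∀ i, (Q₁ * Q₁ᵀ) * mode3 Ak Zᵀ i = mode3 Ak Zᵀ i := by
    intro i
    rw [hChat i]
    by_cases hi : (i : ℕ) < k₃
    · rw [if_pos hi,
        show (Q₁ * Q₁ᵀ) * ((Q₁ * Q₁ᵀ) * mode3 A Zᵀ i * (W₁ * W₁ᵀ))
          = ((Q₁ * Q₁ᵀ) * (Q₁ * Q₁ᵀ)) * mode3 A Zᵀ i * (W₁ * W₁ᵀ) by
            simp only [Matrix.mul_assoc], hP2]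
    · rw [if_neg hi, Matrix.mul_zero]
  have hRabs : ∀ i, mode3 Ak Zᵀ i * (W₁ * W₁ᵀ) = mode3 Ak Zᵀ i := by
    intro i
    rw [hChat i]
    by_cases hi : (i : ℕ) < k₃
    · rw [if_pos hi,
        show (Q₁ * Q₁ᵀ) * mode3 A Zᵀ i * (W₁ * W₁ᵀ) * (W₁ * W₁ᵀ)
          = (Q₁ * Q₁ᵀ) * mode3 A Zᵀ i * ((W₁ * W₁ᵀ) * (W₁ * W₁ᵀ)) by
            simp only [Matrix.mul_assoc], hR2]
    · rw [if_neg hi, Matrix.zero_mul]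
  constructor
  · -- Part 1 : factorization
    rcases le_total k₁ k₂ with hk | hk
    · have hmin : min k₁ k₂ = k₁ := min_eq_left hk
      refine ⟨mode3 (fun _ => Q₁.submatrix id ⇑(finCongr hmin)) ((Zᵀ)⁻¹),
              mode3 (fun i => (Q₁ᵀ).submatrix (⇑(finCongr hmin)) id * mode3 Ak Zᵀ i) ((Zᵀ)⁻¹), ?_⟩
      have hTP : tprodM Zᵀ (mode3 (fun _ => Q₁.submatrix id ⇑(finCongr hmin)) ((Zᵀ)⁻¹))
          (mode3 (fun i => (Q₁ᵀ).submatrix (⇑(finCongr hmin)) id * mode3 Ak Zᵀ i) ((Zᵀ)⁻¹))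
          = mode3 (fun i =>
              Q₁.submatrix id ⇑(finCongr hmin)
                * ((Q₁ᵀ).submatrix (⇑(finCongr hmin)) id * mode3 Ak Zᵀ i)) ((Zᵀ)⁻¹) := by
        show mode3 _ _ = _
        rw [canc_inv_hat Z hZtZ, canc_inv_hat Z hZtZ]
      rw [hTP]
      have hfac : (fun i => Q₁.submatrix id ⇑(finCongr hmin)
          * ((Q₁ᵀ).submatrix (⇑(finCongr hmin)) id * mode3 Ak Zᵀ i)) = mode3 Ak Zᵀ := by
        funext i
        rw [← Matrix.mul_assoc, Matrix.submatrix_mul_equiv Q₁ Q₁ᵀ id (finCongr hmin) id,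
          Matrix.submatrix_id_id]
        exact hPabs i
      rw [hfac, canc_hat_inv Z hZZt hZtZ]
    · have hmin : min k₁ k₂ = k₂ := min_eq_right hk
      refine ⟨mode3 (fun i => mode3 Ak Zᵀ i * W₁.submatrix id ⇑(finCongr hmin)) ((Zᵀ)⁻¹),
              mode3 (fun _ => (W₁ᵀ).submatrix (⇑(finCongr hmin)) id) ((Zᵀ)⁻¹), ?_⟩
      have hTP : tprodM Zᵀ (mode3 (fun i => mode3 Ak Zᵀ i * W₁.submatrix id ⇑(finCongr hmin)) ((Zᵀ)⁻¹))
          (mode3 (fun _ => (W₁ᵀ).submatrix (⇑(finCongr hmin)) id) ((Zᵀ)⁻¹))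
          = mode3 (fun i => (mode3 Ak Zᵀ i * W₁.submatrix id ⇑(finCongr hmin))
              * (W₁ᵀ).submatrix (⇑(finCongr hmin)) id) ((Zᵀ)⁻¹) := by
        show mode3 _ _ = _
        rw [canc_inv_hat Z hZtZ, canc_inv_hat Z hZtZ]
      rw [hTP]
      have hfac : (fun i => (mode3 Ak Zᵀ i * W₁.submatrix id ⇑(finCongr hmin))
          * (W₁ᵀ).submatrix (⇑(finCongr hmin)) id) = mode3 Ak Zᵀ := by
        funext i
        rw [Matrix.mul_assoc, Matrix.submatrix_mul_equiv W₁ W₁ᵀ id (finCongr hmin) id,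
          Matrix.submatrix_id_id]
        exact hRabs i
      rw [hfac, canc_hat_inv Z hZZt hZtZ]
  · -- Part 2 : error bound
    intro U S V hsvd
    obtain ⟨hA, ⟨hU1, hU2⟩, ⟨hV1, hV2⟩, hoff, hdiag, hmon⟩ := hsvd
    have hUo : ∀ i, (mode3 U Zᵀ i)ᵀ * mode3 U Zᵀ i = 1 := by
      intro i
      have e1 : mode3 (tprodM Zᵀ (tconj Zᵀ U) U) Zᵀ i = mode3 (tId (Fin m) Zᵀ) Zᵀ i := by rw [hU1]
      rw [congrFun (hat_tprodM Z hZtZ (tconj Zᵀ U) U) i,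
        congrFun (hat_tconj Z hZtZ U) i, congrFun (hat_tId Z hZtZ (Fin m)) i] at e1
      exact e1
    have hUo' : ∀ i, mode3 U Zᵀ i * (mode3 U Zᵀ i)ᵀ = 1 := by
      intro i
      have e1 : mode3 (tprodM Zᵀ U (tconj Zᵀ U)) Zᵀ i = mode3 (tId (Fin m) Zᵀ) Zᵀ i := by rw [hU2]
      rw [congrFun (hat_tprodM Z hZtZ U (tconj Zᵀ U)) i,
        congrFun (hat_tconj Z hZtZ U) i, congrFun (hat_tId Z hZtZ (Fin m)) i] at e1
      exact e1
    have hVo : ∀ i, (mode3 V Zᵀ i)ᵀ * mode3 V Zᵀ i = 1 := by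
      intro i
      have e1 : mode3 (tprodM Zᵀ (tconj Zᵀ V) V) Zᵀ i = mode3 (tId (Fin p) Zᵀ) Zᵀ i := by rw [hV1]
      rw [congrFun (hat_tprodM Z hZtZ (tconj Zᵀ V) V) i,
        congrFun (hat_tconj Z hZtZ V) i, congrFun (hat_tId Z hZtZ (Fin p)) i] at e1
      exact e1
    have hVo' : ∀ i, mode3 V Zᵀ i * (mode3 V Zᵀ i)ᵀ = 1 := by
      intro i
      have e1 : mode3 (tprodM Zᵀ V (tconj Zᵀ V)) Zᵀ i = mode3 (tId (Fin p) Zᵀ) Zᵀ i := by rw [hV2]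
      rw [congrFun (hat_tprodM Z hZtZ V (tconj Zᵀ V)) i,
        congrFun (hat_tconj Z hZtZ V) i, congrFun (hat_tId Z hZtZ (Fin p)) i] at e1
      exact e1
    have hAhat : ∀ i, mode3 A Zᵀ i = mode3 U Zᵀ i * mode3 S Zᵀ i * (mode3 V Zᵀ i)ᵀ := by
      intro i
      have e1 : mode3 A Zᵀ i = mode3 (tprodM Zᵀ (tprodM Zᵀ U S) (tconj Zᵀ V)) Zᵀ i := by
        rw [← hA]
      rw [congrFun (hat_tprodM Z hZtZ (tprodM Zᵀ U S) (tconj Zᵀ V)) i,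
        congrFun (hat_tprodM Z hZtZ U S) i, congrFun (hat_tconj Z hZtZ V) i] at e1
      exact e1
    have hpos : ∀ (i : Fin n) (a : Fin m) (b : Fin p), (a : ℕ) = (b : ℕ) →
        0 ≤ mode3 S Zᵀ i a b := by
      intro i a b hab
      obtain ⟨r, h0, he⟩ := hdiag i a b hab
      rw [he]; exact h0
    have hmon' : ∀ (i : Fin n) (a a' : Fin m) (b b' : Fin p), (a : ℕ) = (b : ℕ) →
        (a' : ℕ) = (b' : ℕ) → (a : ℕ) ≤ (a' : ℕ) →
        mode3 S Zᵀ i a' b' ≤ mode3 S Zᵀ i a b := by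
      intro i a a' b b' h1 h2 h3
      exact hmon i a a' b b' h1 h2 h3
    -- per-slice comparison
    have hslice : ∀ i,
        f2 (mode3 A Zᵀ i - truncSlice (min k₁ k₂) (mode3 U Zᵀ i) (mode3 S Zᵀ i) (mode3 V Zᵀ i))
          ≤ f2 (mode3 A Zᵀ i - mode3 Ak Zᵀ i) := by
      intro i
      have hoffi : ∀ (j : Fin m) (l : Fin p), (j : ℕ) ≠ (l : ℕ) → mode3 S Zᵀ i j l = 0 :=
        fun j l h => hoff i j l h
      have hdmono : ∀ l l' : Fin p, (l : ℕ) ≤ (l' : ℕ) →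
          (∑ j, mode3 S Zᵀ i j l' ^ 2) ≤ ∑ j, mode3 S Zᵀ i j l ^ 2 :=
        dcol_mono _ hoffi (fun j l h => hpos i j l h)
          (fun j j' l l' e1 e2 e3 => hmon' i j j' l l' e1 e2 e3)
      -- left side value
      have hLval : f2 (mode3 A Zᵀ i
            - truncSlice (min k₁ k₂) (mode3 U Zᵀ i) (mode3 S Zᵀ i) (mode3 V Zᵀ i))
          = ∑ l : Fin p, (if (l : ℕ) < min k₁ k₂ then 0 else ∑ j, mode3 S Zᵀ i j l ^ 2) := by
        rw [hAhat i, truncSlice_eq,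
          show mode3 U Zᵀ i * mode3 S Zᵀ i * (mode3 V Zᵀ i)ᵀ
              - mode3 U Zᵀ i * (Matrix.of fun (j : Fin m) (l : Fin p) =>
                  if (j : ℕ) < min k₁ k₂ ∧ (l : ℕ) < min k₁ k₂ then mode3 S Zᵀ i j l else 0)
                * (mode3 V Zᵀ i)ᵀ
            = mode3 U Zᵀ i * (mode3 S Zᵀ i - Matrix.of fun (j : Fin m) (l : Fin p) =>
                  if (j : ℕ) < min k₁ k₂ ∧ (l : ℕ) < min k₁ k₂ then mode3 S Zᵀ i j l else 0)
                * (mode3 V Zᵀ i)ᵀ by rw [Matrix.mul_sub, Matrix.sub_mul],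
          f2_mul_right (mode3 V Zᵀ i) (hVo i), f2_mul_left (mode3 U Zᵀ i) (hUo i),
          f2_S_sub_D _ hoffi]
      rw [hLval, hChat i]
      have hsumS : f2 (mode3 S Zᵀ i) = ∑ l : Fin p, ∑ j, mode3 S Zᵀ i j l ^ 2 := by
        rw [f2]; exact Finset.sum_comm
      by_cases hi : (i : ℕ) < k₃
      · rw [if_pos hi]
        have hfPXR : f2 ((Q₁ * Q₁ᵀ) * mode3 A Zᵀ i * (W₁ * W₁ᵀ))
            ≤ ∑ l : Fin p, (if (l : ℕ) < min k₁ k₂ then ∑ j, mode3 S Zᵀ i j l ^ 2 else 0) := by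
          have h1 : f2 ((Q₁ * Q₁ᵀ) * mode3 A Zᵀ i * (W₁ * W₁ᵀ))
              = f2 (Q₁ᵀ * mode3 A Zᵀ i * W₁) := by
            rw [show (Q₁ * Q₁ᵀ) * mode3 A Zᵀ i * (W₁ * W₁ᵀ)
                = Q₁ * ((Q₁ᵀ * mode3 A Zᵀ i * W₁) * W₁ᵀ) by simp only [Matrix.mul_assoc],
              f2_mul_left Q₁ hQ₁, f2_mul_right W₁ hW₁]
          have h2 : Q₁ᵀ * mode3 A Zᵀ i * W₁
              = (Q₁ᵀ * mode3 U Zᵀ i) * mode3 S Zᵀ i * (W₁ᵀ * mode3 V Zᵀ i)ᵀ := by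
            rw [hAhat i, Matrix.transpose_mul, Matrix.transpose_transpose]
            simp only [Matrix.mul_assoc]
          have hE : (Q₁ᵀ * mode3 U Zᵀ i) * (Q₁ᵀ * mode3 U Zᵀ i)ᵀ = 1 := by
            rw [Matrix.transpose_mul, Matrix.transpose_transpose,
              show Q₁ᵀ * mode3 U Zᵀ i * ((mode3 U Zᵀ i)ᵀ * Q₁)
                = Q₁ᵀ * ((mode3 U Zᵀ i * (mode3 U Zᵀ i)ᵀ) * Q₁) by simp only [Matrix.mul_assoc],
              hUo' i, Matrix.one_mul, hQ₁]
          have hF : (W₁ᵀ * mode3 V Zᵀ i) * (W₁ᵀ * mode3 V Zᵀ i)ᵀ = 1 := by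
            rw [Matrix.transpose_mul, Matrix.transpose_transpose,
              show W₁ᵀ * mode3 V Zᵀ i * ((mode3 V Zᵀ i)ᵀ * W₁)
                = W₁ᵀ * ((mode3 V Zᵀ i * (mode3 V Zᵀ i)ᵀ) * W₁) by simp only [Matrix.mul_assoc],
              hVo' i, Matrix.one_mul, hW₁]
          have hEt := h2 ▸ h1
          -- now bound f2 (E * Sh * Fᵀ)
          have hb1 : f2 ((Q₁ᵀ * mode3 U Zᵀ i) * mode3 S Zᵀ i * (W₁ᵀ * mode3 V Zᵀ i)ᵀ)
              ≤ ∑ l : Fin p, (if (l : ℕ) < k₂ then ∑ j, mode3 S Zᵀ i j l ^ 2 else 0) :=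
            compress _ _ hE hF _ hoffi hdmono
          have hb2 : f2 ((Q₁ᵀ * mode3 U Zᵀ i) * mode3 S Zᵀ i * (W₁ᵀ * mode3 V Zᵀ i)ᵀ)
              ≤ ∑ l : Fin p, (if (l : ℕ) < k₁ then ∑ j, mode3 S Zᵀ i j l ^ 2 else 0) := by
            have htr : f2 ((Q₁ᵀ * mode3 U Zᵀ i) * mode3 S Zᵀ i * (W₁ᵀ * mode3 V Zᵀ i)ᵀ)
                = f2 ((W₁ᵀ * mode3 V Zᵀ i) * (mode3 S Zᵀ i)ᵀ * (Q₁ᵀ * mode3 U Zᵀ i)ᵀ) := by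
              rw [← f2_transpose ((Q₁ᵀ * mode3 U Zᵀ i) * mode3 S Zᵀ i * (W₁ᵀ * mode3 V Zᵀ i)ᵀ)]
              congr 1
              simp only [Matrix.transpose_mul, Matrix.transpose_transpose, Matrix.mul_assoc]
            rw [htr]
            have hoffT : ∀ (j : Fin p) (l : Fin m), (j : ℕ) ≠ (l : ℕ) →
                (mode3 S Zᵀ i)ᵀ j l = 0 := fun j l h => hoffi l j (Ne.symm h)
            have hdmonoT : ∀ l l' : Fin m, (l : ℕ) ≤ (l' : ℕ) →
                (∑ j, (mode3 S Zᵀ i)ᵀ j l' ^ 2) ≤ ∑ j, (mode3 S Zᵀ i)ᵀ j l ^ 2 :=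
              dcol_mono _ hoffT (fun j l h => hpos i l j h.symm)
                (fun j j' l l' e1 e2 e3 => hmon' i l l' j j' e1.symm e2.symm (by omega))
            have hc := compress _ _ hF hE ((mode3 S Zᵀ i)ᵀ) hoffT hdmonoT
            refine le_trans hc (le_of_eq ?_)
            calc ∑ l : Fin m, (if (l : ℕ) < k₁ then ∑ j : Fin p, (mode3 S Zᵀ i)ᵀ j l ^ 2 else 0)
                = ∑ l : Fin m, (if (l : ℕ) < k₁ then ∑ j : Fin p, mode3 S Zᵀ i l j ^ 2 else 0) := by
                  simp only [Matrix.transpose_apply]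
              _ = ∑ l : Fin p, (if (l : ℕ) < k₁ then ∑ j, mode3 S Zᵀ i j l ^ 2 else 0) :=
                  indswap _ hoffi k₁
          rw [hEt]
          rcases le_total k₁ k₂ with hk | hk
          · rw [min_eq_left hk]; exact hb2
          · rw [min_eq_right hk]; exact hb1
        rw [f2_sub_proj (mode3 A Zᵀ i) (Q₁ * Q₁ᵀ) (W₁ * W₁ᵀ) hPt hP2 hRt hR2]
        have hfA : f2 (mode3 A Zᵀ i) = ∑ l : Fin p, ∑ j, mode3 S Zᵀ i j l ^ 2 := by
          rw [hAhat i, f2_mul_right (mode3 V Zᵀ i) (hVo i), f2_mul_left (mode3 U Zᵀ i) (hUo i),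
            hsumS]
        have hsplit : ∑ l : Fin p, ∑ j, mode3 S Zᵀ i j l ^ 2
            = (∑ l : Fin p, (if (l : ℕ) < min k₁ k₂ then ∑ j, mode3 S Zᵀ i j l ^ 2 else 0))
              + ∑ l : Fin p, (if (l : ℕ) < min k₁ k₂ then 0 else ∑ j, mode3 S Zᵀ i j l ^ 2) := by
          rw [← Finset.sum_add_distrib]
          refine Finset.sum_congr rfl fun l _ => ?_
          by_cases hl : (l : ℕ) < min k₁ k₂ <;> simp [hl]
        rw [hfA]
        linarith [hfPXR]
      · rw [if_neg hi, sub_zero]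
        have hfA : f2 (mode3 A Zᵀ i) = ∑ l : Fin p, ∑ j, mode3 S Zᵀ i j l ^ 2 := by
          rw [hAhat i, f2_mul_right (mode3 V Zᵀ i) (hVo i), f2_mul_left (mode3 U Zᵀ i) (hUo i),
            hsumS]
        rw [hfA]
        refine Finset.sum_le_sum fun l _ => ?_
        by_cases hl : (l : ℕ) < min k₁ k₂
        · rw [if_pos hl]; exact Finset.sum_nonneg fun _ _ => sq_nonneg _
        · rw [if_neg hl]
    -- assemble
    have hM' : (Zᵀ)ᵀ * Zᵀ = 1 := by rw [Matrix.transpose_transpose]; exact hZZt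
    rw [tnorm, tnorm]
    apply Real.sqrt_le_sqrt
    have e1 : ∑ i, fnorm ((fun i => A i - truncTensor Zᵀ U S V (fun _ => min k₁ k₂) i) i) ^ 2
        = ∑ i, f2 (mode3 (fun i => A i - truncTensor Zᵀ U S V (fun _ => min k₁ k₂) i) Zᵀ i) := by
      rw [sumf2_pres Zᵀ hM']
      exact Finset.sum_congr rfl fun i _ => fnorm_sq _
    have e2 : ∑ i, fnorm ((fun i => A i - Ak i) i) ^ 2
        = ∑ i, f2 (mode3 (fun i => A i - Ak i) Zᵀ i) := by
      rw [sumf2_pres Zᵀ hM']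
      exact Finset.sum_congr rfl fun i _ => fnorm_sq _
    rw [e1, e2]
    refine Finset.sum_le_sum fun i _ => ?_
    rw [mode3_sub, mode3_sub, congrFun (hat_trunc Z hZtZ U S V (fun _ => min k₁ k₂)) i]
    exact hslice i
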